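/- There is an absolute constant C > 0 such that for every integer q ≥ 2, every nonprincipal Dirichlet character χ modulo q, all integers k ≥ 1 and L ≥ 1, and every real α > 1: M(χ)^{2k} ≤ C^k · ( ∑_{l=1}^L l^{−α−α/(2k−1)} )^{2k−1} · ∑_{l=1}^L l^{2kα} · ∑_{m=0}^{2^l−1} | ∑_{q·m/2^l < n ≤ q·(2m+1)/2^{l+1}} χ(n) |^{2k} + C^k · q^{2k} · 2^{−2kL}, where the innermost sum is over integers n in the stated interval. -/

import Mathlib

open Finset Real

/-- `S_χ(t) = ∑_{n ≤ t} χ(n)` for integer `t`. -/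
noncomputable def charSum {q : ℕ} (χ : DirichletCharacter ℂ q) (t : ℕ) : ℂ :=
  ∑ n ∈ Finset.Icc 1 t, χ n

/-- `M(χ) = max_{1 ≤ t ≤ q} |S_χ(t)|`. -/
noncomputable def Mmax {q : ℕ} (χ : DirichletCharacter ℂ q) : ℝ :=
  (((Finset.Icc 1 q).sup fun t => ‖charSum χ t‖₊ : NNReal) : ℝ)

/-- The dyadic block sum `∑_{q m/2^l < n ≤ q (2m+1)/2^{l+1}} χ(n)`. -/
noncomputable def dyadicBlock {q : ℕ} (χ : DirichletCharacter ℂ q) (l m : ℕ) : ℂ :=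
  ∑ n ∈ (Finset.range (q + 1)).filter
      (fun n : ℕ => (q : ℝ) * m / 2 ^ l < n ∧ (n : ℝ) ≤ (q : ℝ) * (2 * m + 1) / 2 ^ (l + 1)),
    χ n

namespace MR

variable {q : ℕ} (χ : DirichletCharacter ℂ q)

noncomputable def U (a b : ℝ) : ℂ :=
  ∑ n ∈ (Finset.range (q + 1)).filter (fun n : ℕ => a < (n : ℝ) ∧ (n : ℝ) ≤ b), χ n

lemma dyadicBlock_eq (l m : ℕ) :
    dyadicBlock χ l m = U χ ((q : ℝ) * m / 2 ^ l) ((q : ℝ) * (2 * m + 1) / 2 ^ (l + 1)) := rfl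

lemma U_split {a b : ℝ} (ha : 0 ≤ a) (hab : a ≤ b) :
    U χ 0 b = U χ 0 a + U χ a b := by
  classical
  unfold U
  rw [← Finset.sum_union]
  · apply Finset.sum_congr _ fun _ _ => rfl
    rw [← Finset.filter_or]
    apply Finset.filter_congr
    intro n _
    constructor
    · rintro ⟨h1, h2⟩
      rcases le_or_gt (n : ℝ) a with h | h
      · exact Or.inl ⟨h1, h⟩
      · exact Or.inr ⟨h, h2⟩
    · rintro (⟨h1, h2⟩ | ⟨h1, h2⟩)
      · exact ⟨h1, h2.trans hab⟩
      · exact ⟨lt_of_le_of_lt ha h1, h2⟩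
  · rw [Finset.disjoint_filter]
    rintro n _ ⟨_, h2⟩ ⟨h3, _⟩
    exact absurd h3 (not_lt.mpr h2)

lemma U_eq_zero {a b : ℝ} (h : ∀ n : ℕ, (n : ℝ) ≤ b → (n : ℝ) ≤ a) : U χ a b = 0 := by
  unfold U
  rw [Finset.filter_false_of_mem, Finset.sum_empty]
  rintro n _ ⟨h1, h2⟩
  exact absurd (h n h2) (not_le.mpr h1)

lemma norm_U_le {a b : ℝ} (ha : 0 ≤ a) (hab : a ≤ b) : ‖U χ a b‖ ≤ b - a + 1 := by
  have hcard : ((Finset.range (q + 1)).filter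
      (fun n : ℕ => a < (n : ℝ) ∧ (n : ℝ) ≤ b)) ⊆ Finset.Ioc ⌊a⌋₊ ⌊b⌋₊ := by
    intro n hn
    simp only [Finset.mem_filter] at hn
    obtain ⟨-, h1, h2⟩ := hn
    rw [Finset.mem_Ioc]
    constructor
    · have : (⌊a⌋₊ : ℝ) < (n : ℝ) := lt_of_le_of_lt (Nat.floor_le ha) h1
      exact_mod_cast this
    · exact Nat.le_floor h2
  calc ‖U χ a b‖ ≤ ∑ n ∈ (Finset.range (q + 1)).filter
        (fun n : ℕ => a < (n : ℝ) ∧ (n : ℝ) ≤ b), ‖χ (n : ZMod q)‖ := norm_sum_le _ _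
    _ ≤ ∑ n ∈ (Finset.range (q + 1)).filter
        (fun n : ℕ => a < (n : ℝ) ∧ (n : ℝ) ≤ b), 1 := by
        apply Finset.sum_le_sum
        intro i _
        exact DirichletCharacter.norm_le_one χ _
    _ = ((Finset.range (q + 1)).filter (fun n : ℕ => a < (n : ℝ) ∧ (n : ℝ) ≤ b)).card := by
        simp
    _ ≤ (Finset.Ioc ⌊a⌋₊ ⌊b⌋₊).card := by exact_mod_cast Finset.card_le_card hcard
    _ = (⌊b⌋₊ - ⌊a⌋₊ : ℕ) := by rw [Nat.card_Ioc]
    _ = (⌊b⌋₊ : ℝ) - ⌊a⌋₊ := by rw [Nat.cast_sub (Nat.floor_mono hab)]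
    _ ≤ b - a + 1 := by
        have h1 : (⌊b⌋₊ : ℝ) ≤ b := Nat.floor_le (ha.trans hab)
        have h2 : a - 1 < ⌊a⌋₊ := by
          have := Nat.lt_floor_add_one a
          linarith
        linarith



lemma charSum_eq {t : ℕ} (ht : t ≤ q) : charSum χ t = U χ 0 t := by
  unfold charSum U
  apply Finset.sum_congr _ fun _ _ => rfl
  ext n
  simp only [Finset.mem_Icc, Finset.mem_filter, Finset.mem_range]
  constructor
  · rintro ⟨h1, h2⟩
    refine ⟨by omega, by exact_mod_cast h1, by exact_mod_cast h2⟩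
  · rintro ⟨h0, h1, h2⟩
    have h1' : 1 ≤ n := by exact_mod_cast h1
    have h2' : n ≤ t := by exact_mod_cast h2
    exact ⟨h1', h2'⟩

/-- any Dirichlet character mod 2 is principal -/
lemma char_two_eq_one (ψ : DirichletCharacter ℂ 2) : ψ = 1 := by
  apply MulChar.ext
  intro a
  rw [Subsingleton.elim a 1]
  simp

lemma chi_vanish_half (hq3 : 3 ≤ q) {n : ℕ} (hn : 2 * n = q) : χ n = 0 := by
  haveI : NeZero q := ⟨by omega⟩
  apply MulChar.map_nonunit
  rw [ZMod.isUnit_iff_coprime]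
  intro hcop
  have hdvd : n ∣ q := ⟨2, by omega⟩
  have hg := Nat.gcd_eq_left hdvd
  have : n = 1 := by rw [Nat.Coprime] at hcop; omega
  omega

lemma charSum_q_eq_zero (hq : 2 ≤ q) (hχ : χ ≠ 1) : charSum χ q = 0 := by
  haveI : NeZero q := ⟨by omega⟩
  haveI : Fact (1 < q) := ⟨by omega⟩
  have h0 : χ 0 = 0 := MulChar.map_nonunit χ not_isUnit_zero
  have key : charSum χ q = ∑ x : ZMod q, χ x := by
    unfold charSum
    apply Finset.sum_nbij' (fun n : ℕ => (n : ZMod q)) (fun x : ZMod q => if x = 0 then q else x.val)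
    · intro n _; exact Finset.mem_univ _
    · intro x _
      by_cases hx : x = 0
      · rw [if_pos hx, Finset.mem_Icc]; omega
      · simp only [if_neg hx, Finset.mem_Icc]
        have h1 : x.val ≠ 0 := fun h => hx (by rwa [← ZMod.val_eq_zero])
        exact ⟨by omega, (ZMod.val_lt x).le⟩
    · intro n hn
      simp only [Finset.mem_Icc] at hn
      by_cases hx : (n : ZMod q) = 0
      · rw [if_pos hx]
        have := (ZMod.natCast_eq_zero_iff n q).mp hx
        have : n = q := by
          rcases this with ⟨c, rfl⟩
          rcases hn with ⟨h1, h2⟩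
          nlinarith [Nat.one_le_iff_ne_zero.mpr (show c ≠ 0 by rintro rfl; omega)]
        omega
      · rw [if_neg hx, ZMod.val_natCast]
        have hlt : n < q := by
          rcases Nat.lt_or_ge n q with h | h
          · exact h
          · exfalso; apply hx
            have : n = q := by omega
            rw [this, ZMod.natCast_self]
        exact Nat.mod_eq_of_lt hlt
    · intro x _
      by_cases hx : x = 0
      · rw [if_pos hx, ZMod.natCast_self, hx]
      · rw [if_neg hx]; exact ZMod.natCast_rightInverse x
    · intro n _; rfl
  rw [key, MulChar.sum_eq_zero_of_ne_one hχ]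



lemma add_pow_le_two_pow {x y : ℝ} (hx : 0 ≤ x) (hy : 0 ≤ y) (n : ℕ) :
    (x + y) ^ n ≤ 2 ^ n * (x ^ n + y ^ n) := by
  have h1 : x + y ≤ 2 * max x y := by
    rcases max_cases x y with ⟨h, h'⟩ | ⟨h, h'⟩ <;> rw [h] <;> linarith
  calc (x + y) ^ n ≤ (2 * max x y) ^ n := by
        apply pow_le_pow_left₀ (by positivity) h1
    _ = 2 ^ n * (max x y) ^ n := by rw [mul_pow]
    _ ≤ 2 ^ n * (x ^ n + y ^ n) := by
        apply mul_le_mul_of_nonneg_left _ (by positivity)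
        rcases max_cases x y with ⟨h, _⟩ | ⟨h, _⟩ <;> rw [h]
        · nlinarith [pow_nonneg hy n]
        · nlinarith [pow_nonneg hx n]

/-- weighted Hölder/Jensen step -/
lemma holder_step {L k : ℕ} (hk : 1 ≤ k) (hL : 1 ≤ L) {α : ℝ} (hα : 1 < α)
    (g : ℕ → ℝ) (hg : ∀ l ∈ Finset.Icc 1 L, 0 ≤ g l) :
    (∑ l ∈ Finset.Icc 1 L, g l) ^ (2 * k) ≤
      (∑ l ∈ Finset.Icc 1 L, (l : ℝ) ^ (-α - α / ((2 * k : ℝ) - 1))) ^ (2 * k - 1) *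
        ∑ l ∈ Finset.Icc 1 L, (l : ℝ) ^ ((2 * k : ℝ) * α) * g l ^ (2 * k) := by
  set β : ℝ := α + α / ((2 * k : ℝ) - 1) with hβ
  have hkr : (1 : ℝ) ≤ (2 * k : ℝ) - 1 := by
    have : (1 : ℝ) ≤ k := by exact_mod_cast hk
    push_cast
    linarith
  have hknz : ((2 * k : ℝ) - 1) ≠ 0 := by linarith
  have hβpos : 0 < β := by
    have : 0 < α / ((2 * k : ℝ) - 1) := by positivity
    simp only [hβ]; linarith
  have hneg : ∀ l : ℕ, (l : ℝ) ^ (-α - α / ((2 * k : ℝ) - 1)) = (l : ℝ) ^ (-β) := by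
    intro l; congr 1; simp only [hβ]; ring
  set W : ℝ := ∑ l ∈ Finset.Icc 1 L, (l : ℝ) ^ (-β) with hW
  have hterm_pos : ∀ l ∈ Finset.Icc 1 L, (0:ℝ) < (l : ℝ) ^ (-β) := by
    intro l hl
    have : (0:ℝ) < l := by
      have := (Finset.mem_Icc.mp hl).1; exact_mod_cast Nat.lt_of_lt_of_le Nat.zero_lt_one this
    positivity
  have hWpos : 0 < W := by
    rw [hW]
    apply Finset.sum_pos hterm_pos ⟨1, Finset.mem_Icc.mpr ⟨le_refl 1, hL⟩⟩
  -- Jensen with weights w l = l^(-β)/W and values z l = g l * W * l^β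
  have jensen := Real.pow_arith_mean_le_arith_mean_pow (Finset.Icc 1 L)
      (fun l => (l : ℝ) ^ (-β) / W) (fun l => g l * W * (l : ℝ) ^ β)
      (fun l hl => by positivity)
      (by rw [← Finset.sum_div]; field_simp; exact hW.symm)
      (fun l hl => by
        have h1 := hg l hl
        have h2 : (0:ℝ) ≤ (l:ℝ) ^ β := le_of_lt (by
          have : (0:ℝ) < l := by
            have := (Finset.mem_Icc.mp hl).1
            exact_mod_cast Nat.lt_of_lt_of_le Nat.zero_lt_one this
          positivity)
        positivity)
      (2 * k)
  have hLHS : (∑ l ∈ Finset.Icc 1 L, ((l : ℝ) ^ (-β) / W) * (g l * W * (l : ℝ) ^ β))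
      = ∑ l ∈ Finset.Icc 1 L, g l := by
    apply Finset.sum_congr rfl
    intro l hl
    have hlpos : (0:ℝ) < l := by
      have := (Finset.mem_Icc.mp hl).1
      exact_mod_cast Nat.lt_of_lt_of_le Nat.zero_lt_one this
    have hcancel : (l : ℝ) ^ (-β) * (l : ℝ) ^ β = 1 := by
      rw [← Real.rpow_add hlpos]; simp
    calc ((l : ℝ) ^ (-β) / W) * (g l * W * (l : ℝ) ^ β)
        = ((l:ℝ)^(-β) * (l:ℝ)^β) * g l * (W / W) := by ring
      _ = g l := by rw [hcancel, div_self (ne_of_gt hWpos)]; ring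
  have hRHS : (∑ l ∈ Finset.Icc 1 L, ((l : ℝ) ^ (-β) / W) * (g l * W * (l : ℝ) ^ β) ^ (2 * k))
      = W ^ (2 * k - 1) * ∑ l ∈ Finset.Icc 1 L, (l : ℝ) ^ ((2 * k : ℝ) * α) * g l ^ (2 * k) := by
    rw [Finset.mul_sum]
    apply Finset.sum_congr rfl
    intro l hl
    have hlpos : (0:ℝ) < l := by
      have := (Finset.mem_Icc.mp hl).1
      exact_mod_cast Nat.lt_of_lt_of_le Nat.zero_lt_one this
    have hβα : β * ((2 * k : ℝ) - 1) = (2 * k : ℝ) * α := by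
      rw [hβ]; field_simp; ring
    have hexp : ((l : ℝ) ^ β) ^ (2 * k) * (l : ℝ) ^ (-β) = (l : ℝ) ^ ((2 * k : ℝ) * α) := by
      rw [← Real.rpow_natCast ((l:ℝ) ^ β) (2*k), ← Real.rpow_mul hlpos.le,
        ← Real.rpow_add hlpos, ← hβα]
      congr 1
      push_cast
      ring
    have hWexp : W ^ (2 * k) / W = W ^ (2 * k - 1) := by
      rw [eq_comm, eq_div_iff (ne_of_gt hWpos), ← pow_succ]
      congr 1
      omega
    calc ((l : ℝ) ^ (-β) / W) * (g l * W * (l : ℝ) ^ β) ^ (2 * k)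
        = (((l:ℝ) ^ β) ^ (2 * k) * (l:ℝ) ^ (-β)) * g l ^ (2*k) * (W ^ (2*k) / W) := by
          rw [mul_pow, mul_pow]; ring
      _ = (l:ℝ) ^ ((2 * k : ℝ) * α) * g l ^ (2*k) * W ^ (2*k-1) := by rw [hexp, hWexp]
      _ = W ^ (2 * k - 1) * ((l:ℝ) ^ ((2 * k : ℝ) * α) * g l ^ (2*k)) := by ring
  calc (∑ l ∈ Finset.Icc 1 L, g l) ^ (2 * k)
      = (∑ l ∈ Finset.Icc 1 L, ((l : ℝ) ^ (-β) / W) * (g l * W * (l : ℝ) ^ β)) ^ (2*k) := by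
        rw [hLHS]
    _ ≤ ∑ l ∈ Finset.Icc 1 L, ((l : ℝ) ^ (-β) / W) * (g l * W * (l : ℝ) ^ β) ^ (2 * k) := jensen
    _ = W ^ (2 * k - 1) * ∑ l ∈ Finset.Icc 1 L, (l : ℝ) ^ ((2 * k : ℝ) * α) * g l ^ (2 * k) := hRHS
    _ = (∑ l ∈ Finset.Icc 1 L, (l : ℝ) ^ (-α - α / ((2 * k : ℝ) - 1))) ^ (2 * k - 1) *
        ∑ l ∈ Finset.Icc 1 L, (l : ℝ) ^ ((2 * k : ℝ) * α) * g l ^ (2 * k) := by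
        congr 2
        rw [hW]
        exact Finset.sum_congr rfl fun l _ => (hneg l).symm



/-- dyadic approximation numerator: ceiling version if `q ≤ 2^L`, floor version else. -/
def cval (q t L : ℕ) : ℕ :=
  if q ≤ 2 ^ L then (t * 2 ^ (L + 1) + q - 1) / q else t * 2 ^ (L + 1) / q

def dval (q t L l : ℕ) : ℕ := cval q t L / 2 ^ (L + 1 - l)

noncomputable def zval (q t L l : ℕ) : ℝ := (q : ℝ) * dval q t L l / 2 ^ l

noncomputable def wval (q l : ℕ) : ℝ := (q : ℝ) / 2 - (q : ℝ) / 2 ^ (l + 1)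

section facts

variable {q t L : ℕ}

lemma cval_floor_bounds (hq : 0 < q) (h : ¬ q ≤ 2 ^ L) :
    q * cval q t L ≤ t * 2 ^ (L + 1) ∧ t * 2 ^ (L + 1) < q * cval q t L + q := by
  rw [cval, if_neg h]
  have h1 := Nat.div_add_mod (t * 2 ^ (L + 1)) q
  have h2 : t * 2 ^ (L + 1) % q < q := Nat.mod_lt _ hq
  omega

lemma cval_ceil_bounds (hq : 0 < q) (h : q ≤ 2 ^ L) :
    t * 2 ^ (L + 1) ≤ q * cval q t L ∧ q * cval q t L < t * 2 ^ (L + 1) + q := by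
  rw [cval, if_pos h]
  have h1 := Nat.div_add_mod (t * 2 ^ (L + 1) + q - 1) q
  have h2 : (t * 2 ^ (L + 1) + q - 1) % q < q := Nat.mod_lt _ hq
  omega

lemma cval_lt (hq : 0 < q) (htq : t < q) : cval q t L < 2 ^ (L + 1) := by
  by_cases h : q ≤ 2 ^ L
  · obtain ⟨-, h2⟩ := cval_ceil_bounds (t := t) hq h
    by_contra hc
    push_neg at hc
    have h3 : q * 2 ^ (L + 1) ≤ q * cval q t L := Nat.mul_le_mul_left q hc
    have h4 : (t + 1) * 2 ^ (L + 1) ≤ q * 2 ^ (L + 1) := Nat.mul_le_mul_right _ (by omega)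
    have h5 : 0 < 2 ^ (L + 1) := Nat.pow_pos (by norm_num)
    have h6 : q ≤ 2 ^ (L + 1) := le_trans h (by
      apply Nat.pow_le_pow_right <;> omega)
    nlinarith
  · obtain ⟨h1, h2⟩ := cval_floor_bounds (t := t) hq h
    by_contra hc
    push_neg at hc
    have h3 : q * 2 ^ (L + 1) ≤ q * cval q t L := Nat.mul_le_mul_left q hc
    have h4 : t * 2 ^ (L + 1) < q * 2 ^ (L + 1) := by
      have h5 : 0 < 2 ^ (L + 1) := Nat.pow_pos (by norm_num)
      exact Nat.mul_lt_mul_of_lt_of_le htq (le_refl _) h5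
    omega

lemma dval_zero (hq : 0 < q) (htq : t < q) : dval q t L 0 = 0 := by
  rw [dval]
  simp only [Nat.sub_zero]
  exact Nat.div_eq_of_lt (cval_lt hq htq)

lemma dval_last : dval q t L (L + 1) = cval q t L := by
  rw [dval, Nat.sub_self, pow_zero, Nat.div_one]

lemma dval_lt (hq : 0 < q) (htq : t < q) {l : ℕ} (hl : l ≤ L + 1) :
    dval q t L l < 2 ^ l := by
  rw [dval, Nat.div_lt_iff_lt_mul (Nat.pow_pos (by norm_num))]
  calc cval q t L < 2 ^ (L + 1) := cval_lt hq htq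
    _ = 2 ^ l * 2 ^ (L + 1 - l) := by rw [← pow_add]; congr 1; omega

lemma dval_step {l : ℕ} (hl : l ≤ L) : dval q t L l = dval q t L (l + 1) / 2 := by
  rw [dval, dval, Nat.div_div_eq_div_mul, ← pow_succ]
  congr 2
  omega

lemma dval_succ_bounds {l : ℕ} (hl : l ≤ L) :
    2 * dval q t L l ≤ dval q t L (l + 1) ∧ dval q t L (l + 1) ≤ 2 * dval q t L l + 1 := by
  have := dval_step (q := q) (t := t) hl
  omega

lemma zval_nonneg (l : ℕ) : 0 ≤ zval q t L l := by
  rw [zval]; positivity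

lemma zval_zero (hq : 0 < q) (htq : t < q) : zval q t L 0 = 0 := by
  rw [zval, dval_zero hq htq]; simp

lemma zval_mono {l : ℕ} (hl : l ≤ L) : zval q t L l ≤ zval q t L (l + 1) := by
  have h1 := (dval_succ_bounds (q := q) (t := t) hl).1
  rw [zval, zval]
  have e : (q : ℝ) * dval q t L l / 2 ^ l = (q : ℝ) * (2 * dval q t L l) / 2 ^ (l + 1) := by
    rw [pow_succ]; ring
  rw [e]
  gcongr
  exact_mod_cast h1

lemma two_le_two_pow_succ (l : ℕ) : (2:ℝ) ≤ 2 ^ (l + 1) := by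
  calc (2:ℝ) = 2 ^ 1 := (pow_one 2).symm
    _ ≤ 2 ^ (l + 1) := by
        apply pow_le_pow_right₀ (by norm_num)
        omega

lemma wval_nonneg (l : ℕ) : 0 ≤ wval q l := by
  rw [wval, sub_nonneg]
  exact div_le_div_of_nonneg_left (Nat.cast_nonneg q) (by norm_num) (two_le_two_pow_succ l)

lemma wval_mono {l : ℕ} : wval q l ≤ wval q (l + 1) := by
  rw [wval, wval]
  have : (q : ℝ) / 2 ^ (l + 1 + 1) ≤ (q : ℝ) / 2 ^ (l + 1) := by
    apply div_le_div_of_nonneg_left (Nat.cast_nonneg q) (by positivity)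
    apply pow_le_pow_right₀ (by norm_num)
    omega
  linarith

lemma wval_le_half (l : ℕ) : wval q l ≤ (q : ℝ) / 2 := by
  rw [wval]
  have : 0 ≤ (q : ℝ) / 2 ^ (l + 1) := by positivity
  linarith

end facts



lemma U_zero_zero : U χ 0 0 = 0 :=
  U_eq_zero χ fun n h => h

lemma sum_shift {M : Type*} [AddCommMonoid M] (L : ℕ) (f : ℕ → M) :
    ∑ i ∈ Finset.range L, f (i + 1) = ∑ l ∈ Finset.Icc 1 L, f l := by
  rw [← Finset.Ico_add_one_right_eq_Icc, Finset.sum_Ico_eq_sum_range]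
  norm_num
  exact Finset.sum_congr rfl fun i _ => by rw [add_comm]

section tele

variable {q : ℕ} (χ : DirichletCharacter ℂ q) (t L : ℕ)

lemma telescope (hq : 0 < q) (htq : t < q) :
    ∀ j, j ≤ L + 1 →
      U χ 0 (zval q t L j) = ∑ l ∈ Finset.range j, U χ (zval q t L l) (zval q t L (l + 1)) := by
  intro j
  induction j with
  | zero =>
      intro _
      rw [Finset.sum_range_zero, zval_zero hq htq, U_zero_zero]
  | succ j ih =>
      intro hj
      rw [Finset.sum_range_succ, ← ih (by omega),
        U_split χ (zval_nonneg j) (zval_mono (by omega))]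

lemma telescope_half :
    ∀ j, U χ 0 (wval q j) = ∑ i ∈ Finset.range j, dyadicBlock χ (i + 1) (2 ^ i - 1) := by
  intro j
  induction j with
  | zero =>
      rw [Finset.sum_range_zero, wval, pow_one, sub_self, U_zero_zero]
  | succ j ih =>
      rw [Finset.sum_range_succ, ← ih, U_split χ (wval_nonneg j) wval_mono]
      congr 1
      rw [dyadicBlock_eq]
      have h2j : (1 : ℕ) ≤ 2 ^ j := Nat.one_le_two_pow
      have e1 : (q : ℝ) * ((2 ^ j - 1 : ℕ) : ℝ) / 2 ^ (j + 1) = wval q j := by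
        rw [wval, Nat.cast_sub h2j]
        push_cast
        field_simp
        ring
      have e2 : (q : ℝ) * (2 * ((2 ^ j - 1 : ℕ) : ℝ) + 1) / 2 ^ (j + 1 + 1) = wval q (j + 1) := by
        rw [wval, Nat.cast_sub h2j]
        push_cast
        field_simp
        ring
      rw [e1, e2]

end tele

section key

variable {q : ℕ} (χ : DirichletCharacter ℂ q)

lemma q_div_pow_bound {L : ℕ} (h : ¬ q ≤ 2 ^ L) :
    (q : ℝ) / 2 ^ (L + 1) + 1 ≤ 3 / 2 * ((q : ℝ) / 2 ^ L) := by
  push_neg at h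
  have h' : (2 : ℝ) ^ L ≤ q := by exact_mod_cast h.le
  have hpow : (0 : ℝ) < 2 ^ L := by positivity
  have h1 : (1 : ℝ) ≤ (q : ℝ) / 2 ^ L := (one_le_div hpow).mpr h'
  have h2 : (q : ℝ) / 2 ^ (L + 1) = (q : ℝ) / 2 ^ L / 2 := by
    rw [pow_succ]; ring
  rw [h2]
  linarith

lemma HA (hq3 : 3 ≤ q) {t L : ℕ} (ht1 : 1 ≤ t) (htq : t < q) :
    ‖U χ 0 (t : ℝ) - U χ 0 (zval q t L (L + 1))‖ ≤ 3 / 2 * ((q : ℝ) / 2 ^ L) := by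
  have hq : 0 < q := by omega
  have hpow : (0 : ℝ) < 2 ^ (L + 1) := by positivity
  have hzL : zval q t L (L + 1) = (q : ℝ) * cval q t L / 2 ^ (L + 1) := by
    rw [zval, dval_last]
  by_cases hcase : q ≤ 2 ^ L
  · obtain ⟨hb1, hb2⟩ := cval_ceil_bounds (t := t) (L := L) hq hcase
    have hzt : (t : ℝ) ≤ zval q t L (L + 1) := by
      rw [hzL, le_div_iff₀ hpow]
      calc (t : ℝ) * 2 ^ (L + 1) = ((t * 2 ^ (L + 1) : ℕ) : ℝ) := by push_cast; ring
        _ ≤ ((q * cval q t L : ℕ) : ℝ) := by exact_mod_cast hb1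
        _ = (q : ℝ) * cval q t L := by push_cast; ring
    have hlt : zval q t L (L + 1) < (t : ℝ) + 1 := by
      rw [hzL, div_lt_iff₀ hpow]
      have hc1 : (q * cval q t L : ℕ) < t * 2 ^ (L + 1) + 2 ^ (L + 1) := by
        have : q < 2 ^ (L + 1) := by
          calc q ≤ 2 ^ L := hcase
            _ < 2 ^ (L + 1) := by
                apply Nat.pow_lt_pow_right <;> omega
        omega
      calc (q : ℝ) * cval q t L = ((q * cval q t L : ℕ) : ℝ) := by push_cast; ring
        _ < ((t * 2 ^ (L + 1) + 2 ^ (L + 1) : ℕ) : ℝ) := by exact_mod_cast hc1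
        _ = ((t : ℝ) + 1) * 2 ^ (L + 1) := by push_cast; ring
    have hsplit := U_split χ (a := (t : ℝ)) (b := zval q t L (L + 1))
      (by positivity) hzt
    have hzero : U χ (t : ℝ) (zval q t L (L + 1)) = 0 := by
      apply U_eq_zero
      intro n hn
      have : (n : ℝ) < (t : ℝ) + 1 := lt_of_le_of_lt hn hlt
      have : n < t + 1 := by exact_mod_cast this
      exact_mod_cast Nat.lt_succ_iff.mp this
    rw [hsplit, hzero, add_zero, sub_self, norm_zero]
    positivity
  · obtain ⟨hb1, hb2⟩ := cval_floor_bounds (t := t) (L := L) hq hcase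
    have hzt : zval q t L (L + 1) ≤ (t : ℝ) := by
      rw [hzL, div_le_iff₀ hpow]
      calc (q : ℝ) * cval q t L = ((q * cval q t L : ℕ) : ℝ) := by push_cast; ring
        _ ≤ ((t * 2 ^ (L + 1) : ℕ) : ℝ) := by exact_mod_cast hb1
        _ = (t : ℝ) * 2 ^ (L + 1) := by push_cast; ring
    have hsplit := U_split χ (a := zval q t L (L + 1)) (b := (t : ℝ))
      (zval_nonneg _) hzt
    rw [hsplit]
    have hdiff : (t : ℝ) - zval q t L (L + 1) < (q : ℝ) / 2 ^ (L + 1) := by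
      rw [hzL, sub_lt_iff_lt_add, ← add_div, lt_div_iff₀ hpow]
      calc (t : ℝ) * 2 ^ (L + 1) = ((t * 2 ^ (L + 1) : ℕ) : ℝ) := by push_cast; ring
        _ < ((q * cval q t L + q : ℕ) : ℝ) := by exact_mod_cast hb2
        _ = (q : ℝ) + (q : ℝ) * cval q t L := by push_cast; ring
    have hb := norm_U_le χ (zval_nonneg (q := q) (t := t) (L := L) (L + 1)) hzt
    calc ‖U χ 0 (zval q t L (L + 1)) + U χ (zval q t L (L + 1)) (t : ℝ) -
          U χ 0 (zval q t L (L + 1))‖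
        = ‖U χ (zval q t L (L + 1)) (t : ℝ)‖ := by congr 1; ring
      _ ≤ (t : ℝ) - zval q t L (L + 1) + 1 := hb
      _ ≤ (q : ℝ) / 2 ^ (L + 1) + 1 := by linarith
      _ ≤ 3 / 2 * ((q : ℝ) / 2 ^ L) := q_div_pow_bound hcase

lemma HB (hq3 : 3 ≤ q) (hχ : χ ≠ 1) (L : ℕ) :
    ‖U χ (wval q L) ((q : ℝ) / 2)‖ ≤ 3 / 2 * ((q : ℝ) / 2 ^ L) := by
  by_cases hcase : q ≤ 2 ^ L
  · have hzero : U χ (wval q L) ((q : ℝ) / 2) = 0 := by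
      apply Finset.sum_eq_zero
      intro n hn
      rw [Finset.mem_filter] at hn
      obtain ⟨-, h1, h2⟩ := hn
      have hq2L : (q : ℝ) ≤ 2 ^ L := by exact_mod_cast hcase
      have hhalf : (q : ℝ) / 2 ^ (L + 1) ≤ 1 / 2 := by
        have h2L1 : (q : ℝ) * 2 ≤ 2 ^ (L + 1) := by rw [pow_succ]; linarith
        rw [div_le_div_iff₀ (by positivity) (by norm_num)]
        linarith
      have h1' : (q : ℝ) / 2 - 1 / 2 < (n : ℝ) := by
        have := wval_nonneg (q := q) L
        rw [wval] at h1
        linarith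
      have hup : 2 * n ≤ q := by
        have : 2 * (n : ℝ) ≤ q := by linarith
        exact_mod_cast this
      have hdown : q < 2 * n + 1 := by
        have : (q : ℝ) < 2 * (n : ℝ) + 1 := by linarith
        exact_mod_cast this
      have h2n : 2 * n = q := by omega
      exact chi_vanish_half χ hq3 h2n
    rw [hzero, norm_zero]
    positivity
  · have hb := norm_U_le χ (wval_nonneg (q := q) L) (wval_le_half (q := q) L)
    calc ‖U χ (wval q L) ((q : ℝ) / 2)‖ ≤ (q : ℝ) / 2 - wval q L + 1 := hb
      _ = (q : ℝ) / 2 ^ (L + 1) + 1 := by rw [wval]; ring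
      _ ≤ 3 / 2 * ((q : ℝ) / 2 ^ L) := q_div_pow_bound hcase

end key

section key2

variable {q : ℕ} (χ : DirichletCharacter ℂ q)

lemma HC (hq3 : 3 ≤ q) (hχ : χ ≠ 1) {t L : ℕ} (ht1 : 1 ≤ t) (htq : t < q) :
    ‖U χ (zval q t L 0) (zval q t L 1)‖ ≤
      (∑ l ∈ Finset.Icc 1 L, ‖dyadicBlock χ l (2 ^ (l - 1) - 1)‖) +
        3 / 2 * ((q : ℝ) / 2 ^ L) := by
  have hq : 0 < q := by omega
  have hnn : (0:ℝ) ≤ ∑ l ∈ Finset.Icc 1 L, ‖dyadicBlock χ l (2 ^ (l - 1) - 1)‖ :=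
    Finset.sum_nonneg fun _ _ => norm_nonneg _
  have hz0 : zval q t L 0 = 0 := zval_zero hq htq
  have hd1 : dval q t L 1 < 2 := by
    have := dval_lt (t := t) (L := L) hq htq (l := 1) (by omega)
    simpa using this
  rcases (by omega : dval q t L 1 = 0 ∨ dval q t L 1 = 1) with hd | hd
  · have hz1 : zval q t L 1 = 0 := by rw [zval, hd]; simp
    rw [hz0, hz1, U_zero_zero, norm_zero]
    have : (0:ℝ) ≤ 3 / 2 * ((q : ℝ) / 2 ^ L) := by positivity
    linarith
  · have hz1 : zval q t L 1 = (q : ℝ) / 2 := by rw [zval, hd]; norm_num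
    rw [hz0, hz1]
    have hsplit := U_split χ (a := wval q L) (b := (q : ℝ) / 2)
      (wval_nonneg L) (wval_le_half L)
    rw [hsplit]
    have htel := telescope_half χ L
    have hshift := sum_shift L (fun l => ‖dyadicBlock χ l (2 ^ (l - 1) - 1)‖)
    calc ‖U χ 0 (wval q L) + U χ (wval q L) ((q : ℝ) / 2)‖
        ≤ ‖U χ 0 (wval q L)‖ + ‖U χ (wval q L) ((q : ℝ) / 2)‖ := norm_add_le _ _
      _ ≤ (∑ l ∈ Finset.Icc 1 L, ‖dyadicBlock χ l (2 ^ (l - 1) - 1)‖) +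
          3 / 2 * ((q : ℝ) / 2 ^ L) := by
          apply add_le_add _ (HB χ hq3 hχ L)
          rw [htel]
          calc ‖∑ i ∈ Finset.range L, dyadicBlock χ (i + 1) (2 ^ i - 1)‖
              ≤ ∑ i ∈ Finset.range L, ‖dyadicBlock χ (i + 1) (2 ^ i - 1)‖ :=
                norm_sum_le _ _
            _ = ∑ l ∈ Finset.Icc 1 L, ‖dyadicBlock χ l (2 ^ (l - 1) - 1)‖ := hshift

lemma per_level (hq3 : 3 ≤ q) {t L k : ℕ} (hk : 1 ≤ k) (ht1 : 1 ≤ t) (htq : t < q)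
    {l : ℕ} (hl1 : 1 ≤ l) (hlL : l ≤ L) :
    (‖U χ (zval q t L l) (zval q t L (l + 1))‖ + ‖dyadicBlock χ l (2 ^ (l - 1) - 1)‖) ^ (2 * k)
      ≤ 2 ^ (2 * k + 1) * ∑ m ∈ Finset.range (2 ^ l), ‖dyadicBlock χ l m‖ ^ (2 * k) := by
  have hq : 0 < q := by omega
  set S := ∑ m ∈ Finset.range (2 ^ l), ‖dyadicBlock χ l m‖ ^ (2 * k) with hS
  have hSnn : 0 ≤ S := Finset.sum_nonneg fun _ _ => by positivity
  have hU : ‖U χ (zval q t L l) (zval q t L (l + 1))‖ ^ (2 * k) ≤ S := by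
    obtain ⟨hlo, hhi⟩ := dval_succ_bounds (q := q) (t := t) (l := l) hlL
    rcases (by omega : dval q t L (l + 1) = 2 * dval q t L l ∨
        dval q t L (l + 1) = 2 * dval q t L l + 1) with hd | hd
    · have hz : zval q t L (l + 1) = zval q t L l := by
        rw [zval, zval, hd, pow_succ]
        push_cast
        ring
      rw [hz, U_eq_zero χ (fun n h => h), norm_zero, zero_pow (by omega)]
      exact hSnn
    · have hUeq : U χ (zval q t L l) (zval q t L (l + 1)) = dyadicBlock χ l (dval q t L l) := by
        rw [dyadicBlock_eq]
        have e1 : (q : ℝ) * (dval q t L l) / 2 ^ l = zval q t L l := by rw [zval]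
        have e2 : (q : ℝ) * (2 * (dval q t L l : ℝ) + 1) / 2 ^ (l + 1) =
            zval q t L (l + 1) := by
          rw [zval, hd]
          push_cast
          ring
        rw [e1, e2]
      rw [hUeq]
      apply Finset.single_le_sum (f := fun m => ‖dyadicBlock χ l m‖ ^ (2 * k))
        (fun _ _ => by positivity)
      exact Finset.mem_range.mpr (dval_lt hq htq (by omega))
  have hB : ‖dyadicBlock χ l (2 ^ (l - 1) - 1)‖ ^ (2 * k) ≤ S := by
    apply Finset.single_le_sum (f := fun m => ‖dyadicBlock χ l m‖ ^ (2 * k))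
      (fun _ _ => by positivity)
    apply Finset.mem_range.mpr
    have h1 : 2 ^ (l - 1) ≤ 2 ^ l := Nat.pow_le_pow_right (by norm_num) (by omega)
    have h2 : (1:ℕ) ≤ 2 ^ (l - 1) := Nat.one_le_two_pow
    omega
  calc (‖U χ (zval q t L l) (zval q t L (l + 1))‖ + ‖dyadicBlock χ l (2 ^ (l - 1) - 1)‖) ^ (2 * k)
      ≤ 2 ^ (2 * k) * (‖U χ (zval q t L l) (zval q t L (l + 1))‖ ^ (2 * k) +
          ‖dyadicBlock χ l (2 ^ (l - 1) - 1)‖ ^ (2 * k)) :=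
        add_pow_le_two_pow (norm_nonneg _) (norm_nonneg _) _
    _ ≤ 2 ^ (2 * k) * (S + S) := by
        apply mul_le_mul_of_nonneg_left (add_le_add hU hB) (by positivity)
    _ = 2 ^ (2 * k + 1) * S := by rw [pow_succ]; ring

end key2

section key3

variable {q : ℕ} (χ : DirichletCharacter ℂ q)

lemma key (hq3 : 3 ≤ q) (hχ : χ ≠ 1) {k L : ℕ} (hk : 1 ≤ k) (hL : 1 ≤ L)
    {α : ℝ} (hα : 1 < α) {t : ℕ} (ht1 : 1 ≤ t) (htq : t ≤ q) :
    ‖charSum χ t‖ ^ (2 * k) ≤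
      (64:ℝ) ^ k * (∑ l ∈ Finset.Icc 1 L, (l : ℝ) ^ (-α - α / ((2 * k : ℝ) - 1))) ^ (2 * k - 1) *
          (∑ l ∈ Finset.Icc 1 L, (l : ℝ) ^ ((2 * k : ℝ) * α) *
            ∑ m ∈ Finset.range (2 ^ l), ‖dyadicBlock χ l m‖ ^ (2 * k)) +
        (64:ℝ) ^ k * (q : ℝ) ^ (2 * k) / 2 ^ (2 * k * L) := by
  have hq : 0 < q := by omega
  set W : ℝ := ∑ l ∈ Finset.Icc 1 L, (l : ℝ) ^ (-α - α / ((2 * k : ℝ) - 1)) with hWdef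
  set Sb : ℝ := ∑ l ∈ Finset.Icc 1 L, (l : ℝ) ^ ((2 * k : ℝ) * α) *
      ∑ m ∈ Finset.range (2 ^ l), ‖dyadicBlock χ l m‖ ^ (2 * k) with hSdef
  have hWnn : 0 ≤ W :=
    Finset.sum_nonneg fun l _ => Real.rpow_nonneg (Nat.cast_nonneg l) _
  have hSnn2 : 0 ≤ Sb :=
    Finset.sum_nonneg fun l _ => mul_nonneg (Real.rpow_nonneg (Nat.cast_nonneg l) _)
      (Finset.sum_nonneg fun m _ => by positivity)
  by_cases ht : t = q
  · rw [ht, charSum_q_eq_zero χ (by omega) hχ, norm_zero, zero_pow (by omega : 2 * k ≠ 0)]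
    have h1 : (0:ℝ) ≤ (64:ℝ) ^ k * W ^ (2 * k - 1) * Sb :=
      mul_nonneg (mul_nonneg (by positivity) (pow_nonneg hWnn _)) hSnn2
    have h2 : (0:ℝ) ≤ (64:ℝ) ^ k * (q : ℝ) ^ (2 * k) / 2 ^ (2 * k * L) := by positivity
    linarith
  · have htq' : t < q := by omega
    set g : ℕ → ℝ := fun l =>
      ‖U χ (zval q t L l) (zval q t L (l + 1))‖ + ‖dyadicBlock χ l (2 ^ (l - 1) - 1)‖ with hgdef
    have hg_nonneg : ∀ l ∈ Finset.Icc 1 L, 0 ≤ g l :=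
      fun l _ => add_nonneg (norm_nonneg _) (norm_nonneg _)
    have hX : 0 ≤ ∑ l ∈ Finset.Icc 1 L, g l := Finset.sum_nonneg hg_nonneg
    -- main pointwise decomposition bound
    have hmain : ‖U χ 0 (t : ℝ)‖ ≤ (∑ l ∈ Finset.Icc 1 L, g l) + 3 * ((q : ℝ) / 2 ^ L) := by
      have htel := telescope χ t L hq htq' (L + 1) (le_refl _)
      have hz_bound : ‖U χ 0 (zval q t L (L + 1))‖ ≤
          (∑ l ∈ Finset.Icc 1 L, g l) + 3 / 2 * ((q : ℝ) / 2 ^ L) := by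
        rw [htel, Finset.sum_range_succ']
        have hshift := sum_shift L
          (fun l => ‖U χ (zval q t L l) (zval q t L (l + 1))‖)
        calc ‖(∑ i ∈ Finset.range L, U χ (zval q t L (i + 1)) (zval q t L (i + 1 + 1))) +
              U χ (zval q t L 0) (zval q t L (0 + 1))‖
            ≤ ‖∑ i ∈ Finset.range L, U χ (zval q t L (i + 1)) (zval q t L (i + 1 + 1))‖ +
              ‖U χ (zval q t L 0) (zval q t L (0 + 1))‖ := norm_add_le _ _
          _ ≤ (∑ i ∈ Finset.range L, ‖U χ (zval q t L (i + 1)) (zval q t L (i + 1 + 1))‖) +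
              ‖U χ (zval q t L 0) (zval q t L 1)‖ := by
              apply add_le_add (norm_sum_le _ _) (le_of_eq rfl)
          _ = (∑ l ∈ Finset.Icc 1 L, ‖U χ (zval q t L l) (zval q t L (l + 1))‖) +
              ‖U χ (zval q t L 0) (zval q t L 1)‖ := by rw [hshift]
          _ ≤ (∑ l ∈ Finset.Icc 1 L, ‖U χ (zval q t L l) (zval q t L (l + 1))‖) +
              ((∑ l ∈ Finset.Icc 1 L, ‖dyadicBlock χ l (2 ^ (l - 1) - 1)‖) +
                3 / 2 * ((q : ℝ) / 2 ^ L)) := by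
              exact add_le_add (le_refl _) (HC χ hq3 hχ ht1 htq')
          _ = (∑ l ∈ Finset.Icc 1 L, g l) + 3 / 2 * ((q : ℝ) / 2 ^ L) := by
              rw [hgdef, Finset.sum_add_distrib]
              ring
      calc ‖U χ 0 (t : ℝ)‖
          = ‖U χ 0 (zval q t L (L + 1)) + (U χ 0 (t : ℝ) - U χ 0 (zval q t L (L + 1)))‖ := by
            congr 1; ring
        _ ≤ ‖U χ 0 (zval q t L (L + 1))‖ + ‖U χ 0 (t : ℝ) - U χ 0 (zval q t L (L + 1))‖ :=
            norm_add_le _ _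
        _ ≤ ((∑ l ∈ Finset.Icc 1 L, g l) + 3 / 2 * ((q : ℝ) / 2 ^ L)) +
            3 / 2 * ((q : ℝ) / 2 ^ L) := add_le_add hz_bound (HA χ hq3 ht1 htq')
        _ = (∑ l ∈ Finset.Icc 1 L, g l) + 3 * ((q : ℝ) / 2 ^ L) := by ring
    -- Hölder + per-level block bounds
    have hHolder := holder_step hk hL hα g hg_nonneg
    have hperlevel : (∑ l ∈ Finset.Icc 1 L, (l : ℝ) ^ ((2 * k : ℝ) * α) * g l ^ (2 * k)) ≤
        2 ^ (2 * k + 1) * Sb := by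
      rw [hSdef, Finset.mul_sum]
      apply Finset.sum_le_sum
      intro l hl
      obtain ⟨hl1, hlL⟩ := Finset.mem_Icc.mp hl
      have hpl := per_level χ hq3 hk ht1 htq' hl1 hlL
      calc (l : ℝ) ^ ((2 * k : ℝ) * α) * g l ^ (2 * k)
          ≤ (l : ℝ) ^ ((2 * k : ℝ) * α) *
            (2 ^ (2 * k + 1) * ∑ m ∈ Finset.range (2 ^ l), ‖dyadicBlock χ l m‖ ^ (2 * k)) :=
            mul_le_mul_of_nonneg_left hpl (Real.rpow_nonneg (Nat.cast_nonneg l) _)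
        _ = 2 ^ (2 * k + 1) * ((l : ℝ) ^ ((2 * k : ℝ) * α) *
            ∑ m ∈ Finset.range (2 ^ l), ‖dyadicBlock χ l m‖ ^ (2 * k)) := by ring
    -- final constants
    have h64a : (2:ℝ) ^ (2 * k) * 2 ^ (2 * k + 1) ≤ (64:ℝ) ^ k := by
      rw [← pow_add]
      calc (2:ℝ) ^ (2 * k + (2 * k + 1)) ≤ (2:ℝ) ^ (6 * k) := by
            apply pow_le_pow_right₀ (by norm_num)
            omega
        _ = ((2:ℝ) ^ 6) ^ k := by rw [← pow_mul]
        _ = (64:ℝ) ^ k := by norm_num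
    have h64b : (2:ℝ) ^ (2 * k) * (3 * ((q : ℝ) / 2 ^ L)) ^ (2 * k) ≤
        (64:ℝ) ^ k * (q : ℝ) ^ (2 * k) / 2 ^ (2 * k * L) := by
      have e1 : (2:ℝ) ^ (2 * k) * (3 * ((q : ℝ) / 2 ^ L)) ^ (2 * k) =
          (36:ℝ) ^ k * ((q : ℝ) ^ (2 * k) / 2 ^ (2 * k * L)) := by
        have hd : ((2:ℝ) ^ L) ^ (2 * k) = 2 ^ (2 * k * L) := by
          rw [← pow_mul, mul_comm L (2 * k)]
        have h36 : (2:ℝ) ^ (2 * k) * 3 ^ (2 * k) = 36 ^ k := by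
          rw [← mul_pow, pow_mul]
          norm_num
        rw [mul_pow, div_pow, hd, ← h36]
        ring
      rw [e1, mul_div_assoc]
      apply mul_le_mul_of_nonneg_right _ (by positivity)
      apply pow_le_pow_left₀ (by norm_num) (by norm_num)
    calc ‖charSum χ t‖ ^ (2 * k)
        ≤ ((∑ l ∈ Finset.Icc 1 L, g l) + 3 * ((q : ℝ) / 2 ^ L)) ^ (2 * k) := by
          apply pow_le_pow_left₀ (norm_nonneg _)
          rw [charSum_eq χ htq]
          exact hmain
      _ ≤ 2 ^ (2 * k) * ((∑ l ∈ Finset.Icc 1 L, g l) ^ (2 * k) +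
          (3 * ((q : ℝ) / 2 ^ L)) ^ (2 * k)) := add_pow_le_two_pow hX (by positivity) _
      _ ≤ 2 ^ (2 * k) * ((W ^ (2 * k - 1) *
          (2 ^ (2 * k + 1) * Sb)) + (3 * ((q : ℝ) / 2 ^ L)) ^ (2 * k)) := by
          apply mul_le_mul_of_nonneg_left _ (by positivity)
          apply add_le_add _ (le_refl _)
          calc (∑ l ∈ Finset.Icc 1 L, g l) ^ (2 * k)
              ≤ W ^ (2 * k - 1) *
                ∑ l ∈ Finset.Icc 1 L, (l : ℝ) ^ ((2 * k : ℝ) * α) * g l ^ (2 * k) := hHolder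
            _ ≤ W ^ (2 * k - 1) * (2 ^ (2 * k + 1) * Sb) :=
                mul_le_mul_of_nonneg_left hperlevel (pow_nonneg hWnn _)
      _ = (2 ^ (2 * k) * 2 ^ (2 * k + 1)) * (W ^ (2 * k - 1) * Sb) +
          2 ^ (2 * k) * (3 * ((q : ℝ) / 2 ^ L)) ^ (2 * k) := by ring
      _ ≤ (64:ℝ) ^ k * (W ^ (2 * k - 1) * Sb) +
          (64:ℝ) ^ k * (q : ℝ) ^ (2 * k) / 2 ^ (2 * k * L) := by
          apply add_le_add _ h64b
          exact mul_le_mul_of_nonneg_right h64a (mul_nonneg (pow_nonneg hWnn _) hSnn2)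
      _ = (64:ℝ) ^ k * W ^ (2 * k - 1) * Sb +
          (64:ℝ) ^ k * (q : ℝ) ^ (2 * k) / 2 ^ (2 * k * L) := by ring

end key3

end MR


theorem menchov_rademacher_bound :
    ∃ C : ℝ, 0 < C ∧ ∀ q : ℕ, 2 ≤ q → ∀ χ : DirichletCharacter ℂ q, χ ≠ 1 →
      ∀ k L : ℕ, 1 ≤ k → 1 ≤ L → ∀ α : ℝ, 1 < α →
        Mmax χ ^ (2 * k) ≤
          C ^ k * (∑ l ∈ Finset.Icc 1 L, (l : ℝ) ^ (-α - α / ((2 * k : ℝ) - 1))) ^ (2 * k - 1) *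
              (∑ l ∈ Finset.Icc 1 L, (l : ℝ) ^ ((2 * k : ℝ) * α) *
                ∑ m ∈ Finset.range (2 ^ l), ‖dyadicBlock χ l m‖ ^ (2 * k)) +
            C ^ k * (q : ℝ) ^ (2 * k) / 2 ^ (2 * k * L) := by
  refine ⟨64, by norm_num, ?_⟩
  intro q hq χ hχ k L hk hL α hα
  by_cases hq2 : q = 2
  · subst hq2
    exact absurd (MR.char_two_eq_one χ) hχ
  · have hq3 : 3 ≤ q := by omega
    obtain ⟨t, ht, hsup⟩ := Finset.exists_mem_eq_sup (Finset.Icc 1 q)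
      ⟨1, Finset.mem_Icc.mpr ⟨le_refl 1, by omega⟩⟩ (fun t => ‖charSum χ t‖₊)
    have hM : Mmax χ = ‖charSum χ t‖ := by
      rw [Mmax, hsup]
      simp
    rw [hM]
    obtain ⟨ht1, htq⟩ := Finset.mem_Icc.mp ht
    exact MR.key χ hq3 hχ hk hL hα ht1 htq
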